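/- In the SAT-reduction Stackelberg task for a CNF φ over x_1,…,x_n (leader deletes one of T_i, F_i for each i to fix an assignment; follower has for each clause C_k an action val_k adding U with precondition asserting the negation of every literal of C_k), the follower task is unsolvable after a leader plan fixing a complete assignment if and only if that assignment satisfies φ; hence STACKELSAT for this task answers yes iff φ is satisfiable. -/

import Mathlib

/-- A STRIPS action: positive preconditions `pre`, negative preconditions `npre`,
add effect `add`, delete effect `del`, and a cost. -/
structure Act (V : Type) where
  pre : Finset V
  npre : Finset V
  add : Finset V
  del : Finset V
  cost : ℕ

variable {V : Type} [DecidableEq V]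

/-- An action is applicable in a state iff its precondition holds. -/
def app (s : Finset V) (a : Act V) : Prop := a.pre ⊆ s ∧ Disjoint a.npre s

/-- Executing an action: s⟦a⟧ = (s \ del(a)) ∪ add(a). -/
def exec (s : Finset V) (a : Act V) : Finset V := (s \ a.del) ∪ a.add

/-- Iterated execution of an action sequence. -/
def execSeq (s : Finset V) : List (Act V) → Finset V
  | [] => s
  | a :: π => execSeq (exec s a) π

/-- Iterated applicability of an action sequence. -/
def appSeq (s : Finset V) : List (Act V) → Prop
  | [] => True
  | a :: π => app s a ∧ appSeq (exec s a) π

/-- The cost of an action sequence. -/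
def listCost (π : List (Act V)) : ℕ := (π.map Act.cost).sum

/-- Facts of the SAT-reduction task: T_i, F_i for each variable, and U. -/
inductive SFact (n : ℕ) where
  | T : Fin n → SFact n
  | F : Fin n → SFact n
  | U : SFact n
  deriving DecidableEq

/-- Leader action fixing variable i to value b by deleting the opposite fact. -/
def selV (n : ℕ) (i : Fin n) (b : Bool) : Act (SFact n) :=
  { pre := {if b then SFact.T i else SFact.F i}, npre := ∅, add := ∅,
    del := {if b then SFact.F i else SFact.T i}, cost := 1 }

/-- Follower action for clause c: precondition asserts the negation of every literal
of c, add effect {U}. -/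
def valC (n : ℕ) (c : List (Fin n × Bool)) : Act (SFact n) :=
  { pre := (c.map fun l => if l.2 then SFact.F l.1 else SFact.T l.1).toFinset,
    npre := ∅, add := {SFact.U}, del := ∅, cost := 1 }

/-- Leader actions of the SAT-reduction task. -/
def isSatLeader (n : ℕ) (a : Act (SFact n)) : Prop := ∃ i b, a = selV n i b

/-- Follower actions of the SAT-reduction task. -/
def isSatFollower (n : ℕ) (clauses : List (List (Fin n × Bool)))
    (a : Act (SFact n)) : Prop := ∃ c ∈ clauses, a = valC n c

/-- Initial state: all T_i and F_i. -/
def satInit (n : ℕ) : Finset (SFact n) :=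
  (Finset.univ.image (SFact.T (n := n))) ∪ (Finset.univ.image (SFact.F (n := n)))

section helpers

variable {n : ℕ}

lemma mem_satInit {x : SFact n} : x ∈ satInit n ↔ x ≠ SFact.U := by
  cases x <;> simp [satInit]

/-- the fact deleted by `selV n i b` -/
def oppFact (p : Fin n × Bool) : SFact n := if p.2 then SFact.F p.1 else SFact.T p.1

/-- the fact required (and kept) by `selV n i b` -/
def keepFact (p : Fin n × Bool) : SFact n := if p.2 then SFact.T p.1 else SFact.F p.1

lemma exec_sel (s : Finset (SFact n)) (i : Fin n) (b : Bool) :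
    exec s (selV n i b) = s \ {oppFact (i, b)} := by
  simp [exec, selV, oppFact]

lemma execSeq_selList (l : List (Fin n × Bool)) (s : Finset (SFact n)) :
    execSeq s (l.map fun p => selV n p.1 p.2) = s \ (l.map oppFact).toFinset := by
  induction l generalizing s with
  | nil => simp [execSeq]
  | cons p t ih =>
      simp only [List.map_cons, execSeq, exec_sel, ih, List.toFinset_cons]
      ext x; simp; tauto

lemma appSeq_selList (l : List (Fin n × Bool)) (s : Finset (SFact n))
    (hnd : (l.map Prod.fst).Nodup)
    (hkeep : ∀ p ∈ l, keepFact p ∈ s) :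
    appSeq s (l.map fun p => selV n p.1 p.2) := by
  induction l generalizing s with
  | nil => trivial
  | cons p t ih =>
      simp only [List.map_cons, List.nodup_cons] at hnd
      refine ⟨⟨?_, by simp [selV]⟩, ?_⟩
      · have := hkeep p (by simp)
        cases hb : p.2 <;> simp [selV, keepFact, hb] at this ⊢ <;> exact this
      · rw [exec_sel (i := p.1) (b := p.2)]
        refine ih _ hnd.2 ?_
        intro q hq
        rw [Finset.mem_sdiff]
        refine ⟨hkeep q (by simp [hq]), ?_⟩
        have hne : q.1 ≠ p.1 := by
          intro h; exact hnd.1 (by simpa [h] using List.mem_map_of_mem (f := Prod.fst) hq)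
        simp only [Finset.mem_singleton]
        cases hq2 : q.2 <;> cases hp2 : p.2 <;>
          simp [keepFact, oppFact, hq2, hp2, hne]

lemma mem_execSel (α : Fin n → Bool) (x : SFact n) :
    x ∈ execSeq (satInit n) (List.ofFn fun i => selV n i (α i)) ↔
      x ≠ SFact.U ∧ ∀ i : Fin n, x ≠ oppFact (i, α i) := by
  have h1 : (List.ofFn fun i => selV n i (α i)) =
      ((List.finRange n).map fun i => (i, α i)).map (fun p => selV n p.1 p.2) := by
    rw [List.ofFn_eq_map, List.map_map]; rfl
  rw [h1, execSeq_selList, Finset.mem_sdiff, mem_satInit, List.mem_toFinset,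
    List.map_map]
  simp only [List.mem_map, List.mem_finRange, Function.comp]
  constructor
  · rintro ⟨h, h2⟩; exact ⟨h, fun i hi => h2 ⟨i, trivial, hi.symm⟩⟩
  · rintro ⟨h, h2⟩; exact ⟨h, fun ⟨i, _, hi⟩ => h2 i hi.symm⟩

lemma T_mem_execSel (α : Fin n → Bool) (i : Fin n) :
    SFact.T i ∈ execSeq (satInit n) (List.ofFn fun j => selV n j (α j)) ↔ α i = true := by
  rw [mem_execSel]
  constructor
  · rintro ⟨-, h⟩
    by_contra hb
    have hb' : α i = false := by simpa using hb
    exact h i (by simp [oppFact, hb'])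
  · intro hb
    refine ⟨by simp, fun j => ?_⟩
    cases hj : α j <;> simp [oppFact, hj]
    intro h; rw [← h] at hj; rw [hb] at hj; exact Bool.noConfusion hj

lemma F_mem_execSel (α : Fin n → Bool) (i : Fin n) :
    SFact.F i ∈ execSeq (satInit n) (List.ofFn fun j => selV n j (α j)) ↔ α i = false := by
  rw [mem_execSel]
  constructor
  · rintro ⟨-, h⟩
    by_contra hb
    have hb' : α i = true := by simpa using hb
    exact h i (by simp [oppFact, hb'])
  · intro hb
    refine ⟨by simp, fun j => ?_⟩
    cases hj : α j <;> simp [oppFact, hj]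
    intro h; rw [← h] at hj; rw [hb] at hj; exact Bool.noConfusion hj

lemma U_not_mem_execSel (α : Fin n → Bool) :
    SFact.U ∉ execSeq (satInit n) (List.ofFn fun j => selV n j (α j)) := by
  rw [mem_execSel]; simp

lemma app_valC (s : Finset (SFact n)) (c : List (Fin n × Bool)) :
    app s (valC n c) ↔ ∀ l ∈ c, (if l.2 then SFact.F l.1 else SFact.T l.1) ∈ s := by
  simp only [app, valC, Finset.disjoint_empty_left, and_true, Finset.subset_iff,
    List.mem_toFinset, List.mem_map]
  constructor
  · intro h l hl; exact h ⟨l, hl, rfl⟩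
  · rintro h x ⟨l, hl, rfl⟩; exact h l hl

/-- Key lemma A: the follower task from the state fixed by assignment α is
unsolvable iff α satisfies all clauses. -/
lemma keyA (α : Fin n → Bool) (clauses : List (List (Fin n × Bool))) :
    (∀ πF, (∀ a ∈ πF, isSatFollower n clauses a) →
        ¬ (appSeq (execSeq (satInit n) (List.ofFn fun i => selV n i (α i))) πF ∧
           {SFact.U} ⊆
             execSeq (execSeq (satInit n) (List.ofFn fun i => selV n i (α i))) πF)) ↔
      ∀ c ∈ clauses, ∃ l ∈ c, α l.1 = l.2 := by
  set S := execSeq (satInit n) (List.ofFn fun i => selV n i (α i)) with hS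
  constructor
  · intro h c hc
    by_contra hno
    push_neg at hno
    refine h [valC n c] (by rintro a ha; simp at ha; exact ⟨c, hc, ha⟩) ⟨⟨?_, trivial⟩, ?_⟩
    · rw [app_valC]
      intro l hl
      have := hno l hl
      cases hl2 : l.2 with
      | true =>
          simp only [hl2, if_true]
          rw [hS, F_mem_execSel]
          rw [hl2] at this; simpa using this
      | false =>
          simp only [hl2, Bool.false_eq_true, if_false]
          rw [hS, T_mem_execSel]
          rw [hl2] at this; simpa using this
    · show {SFact.U} ⊆ execSeq (exec S (valC n c)) []
      simp [execSeq, exec, valC, Finset.singleton_subset_iff]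
  · rintro h πF hfol ⟨happ, hU⟩
    cases πF with
    | nil =>
        exact U_not_mem_execSel α (hU (Finset.mem_singleton_self _))
    | cons a t =>
        obtain ⟨c, hc, rfl⟩ := hfol a (by simp)
        have happ1 : app S (valC n c) := happ.1
        rw [app_valC] at happ1
        obtain ⟨l, hl, hsat⟩ := h c hc
        have := happ1 l hl
        cases hl2 : l.2 with
        | true =>
            rw [hl2, if_pos rfl] at this
            rw [hS, F_mem_execSel] at this
            rw [hl2] at hsat; rw [hsat] at this; exact Bool.noConfusion this
        | false =>
            rw [hl2, if_neg (by simp)] at this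
            rw [hS, T_mem_execSel] at this
            rw [hl2] at hsat; rw [hsat] at this; exact Bool.noConfusion this

/-- Invariant: after any applicable leader plan, for each variable at least one
of T_i, F_i remains. -/
lemma leader_inv (πL : List (Act (SFact n))) :
    ∀ s : Finset (SFact n), (∀ a ∈ πL, isSatLeader n a) → appSeq s πL →
      (∀ i, SFact.T i ∈ s ∨ SFact.F i ∈ s) →
      ∀ i, SFact.T i ∈ execSeq s πL ∨ SFact.F i ∈ execSeq s πL := by
  induction πL with
  | nil => intro s _ _ h i; exact h i
  | cons a t ih =>
      rintro s hL ⟨ha, ht⟩ hinv i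
      obtain ⟨j, b, rfl⟩ := hL a (by simp)
      refine ih (exec s (selV n j b)) (fun x hx => hL x (by simp [hx])) ht ?_ i
      intro k
      rw [exec_sel]
      by_cases hk : k = j
      · subst hk
        have hkeep : keepFact (k, b) ∈ s := by
          have := ha.1
          cases b <;> simp [selV, keepFact, Finset.singleton_subset_iff] at this ⊢ <;>
            exact this
        cases hb : b <;> rw [hb] at hkeep <;>
          [right; left] <;>
          (rw [Finset.mem_sdiff]; exact ⟨by simpa [keepFact, hb] using hkeep,
            by simp [oppFact, hb]⟩)
      · rcases hinv k with h | h
        · left; rw [Finset.mem_sdiff]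
          exact ⟨h, by cases b <;> simp [oppFact, hk]⟩
        · right; rw [Finset.mem_sdiff]
          exact ⟨h, by cases b <;> simp [oppFact, hk]⟩

end helpers

/-- SAT reduction: a complete leader assignment makes the follower task unsolvable iff
the assignment satisfies φ; hence STACKELSAT answers yes iff φ is satisfiable. -/
theorem sat_reduction (n : ℕ) (clauses : List (List (Fin n × Bool))) :
    (∀ α : Fin n → Bool,
      ((∀ πF, (∀ a ∈ πF, isSatFollower n clauses a) →
        ¬ (appSeq (execSeq (satInit n) (List.ofFn fun i => selV n i (α i))) πF ∧
           {SFact.U} ⊆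
             execSeq (execSeq (satInit n) (List.ofFn fun i => selV n i (α i))) πF)) ↔
      ∀ c ∈ clauses, ∃ l ∈ c, α l.1 = l.2)) ∧
    ((∃ πL, (∀ a ∈ πL, isSatLeader n a) ∧ appSeq (satInit n) πL ∧
        ∀ πF, (∀ a ∈ πF, isSatFollower n clauses a) →
          ¬ (appSeq (execSeq (satInit n) πL) πF ∧
             {SFact.U} ⊆ execSeq (execSeq (satInit n) πL) πF)) ↔
      ∃ α : Fin n → Bool, ∀ c ∈ clauses, ∃ l ∈ c, α l.1 = l.2) := by
  constructor
  · exact fun α => keyA α clauses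
  constructor
  · rintro ⟨πL, hL, happL, hunsolv⟩
    set S := execSeq (satInit n) πL with hS
    have hinv : ∀ i, SFact.T i ∈ S ∨ SFact.F i ∈ S := by
      refine leader_inv πL (satInit n) hL happL ?_
      intro i; left; rw [mem_satInit]; simp
    refine ⟨fun i => decide (SFact.T i ∈ S), ?_⟩
    intro c hc
    by_contra hno
    push_neg at hno
    refine hunsolv [valC n c] (by rintro a ha; simp at ha; exact ⟨c, hc, ha⟩)
      ⟨⟨?_, trivial⟩, ?_⟩
    · rw [app_valC]
      intro l hl
      have hne := hno l hl
      cases hl2 : l.2 with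
      | true =>
          rw [hl2] at hne
          have hT : SFact.T l.1 ∉ S := by
            intro h; exact hne (by simp [h])
          simp only [hl2, if_true]
          rcases hinv l.1 with h | h
          · exact absurd h hT
          · exact h
      | false =>
          rw [hl2] at hne
          have hT : SFact.T l.1 ∈ S := by
            by_contra h; exact hne (by simp [h])
          simpa [hl2] using hT
    · show {SFact.U} ⊆ execSeq (exec S (valC n c)) []
      simp [execSeq, exec, valC, Finset.singleton_subset_iff]
  · rintro ⟨α, hα⟩
    refine ⟨List.ofFn fun i => selV n i (α i), ?_, ?_, (keyA α clauses).mpr hα⟩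
    · intro a ha
      rw [List.mem_ofFn] at ha
      obtain ⟨i, rfl⟩ := ha
      exact ⟨i, α i, rfl⟩
    · have h1 : (List.ofFn fun i => selV n i (α i)) =
          ((List.finRange n).map fun i => (i, α i)).map (fun p => selV n p.1 p.2) := by
        rw [List.ofFn_eq_map, List.map_map]; rfl
      rw [h1]
      refine appSeq_selList _ _ ?_ ?_
      · rw [List.map_map]
        have : (Prod.fst ∘ fun i : Fin n => (i, α i)) = id := rfl
        rw [this, List.map_id]
        exact List.nodup_finRange n
      · rintro p hp
        rw [mem_satInit]
        cases hb : p.2 <;> simp [keepFact, hb]
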